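/- Let u: ℝ² → ℂ be a function with absolutely convergent Fourier series u(x,t) = Σ_{j≥0,k≥0} û(j,k) e^{i2jx}e^{ikt} (only nonnegative frequencies in both variables). If u is Hölder continuous of exponent γ ∈ (0,1], then for every 0 < γ' < γ, u belongs to the Sobolev space H^{γ'}, i.e. Σ_{j,k≥0} (2|j|+|k|)^{2γ'} |û(j,k)|² < ∞, with ‖u‖²_{H^{γ'}} ≤ c(γ−γ')^{-1} ‖u‖²_{C^{0,γ}}. -/

import Mathlib

open Real Complex

section Aux
open Finset

lemma orth_ne (N : ℕ) (d : ℤ) (hd : d ≠ 0) (hdN : |d| < N) :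
    ∑ p ∈ Finset.range N, Complex.exp (2 * π * Complex.I * d * p / N) = 0 := by
  have hN : (0:ℤ) < N := lt_of_le_of_lt (abs_nonneg d) hdN
  have hNc : (N:ℂ) ≠ 0 := by exact_mod_cast hN.ne'
  set z : ℂ := Complex.exp (2 * π * Complex.I * d / N) with hz
  have hzp : ∀ p : ℕ, Complex.exp (2 * π * Complex.I * d * p / N) = z ^ p := by
    intro p
    rw [hz, ← Complex.exp_nat_mul]
    congr 1
    field_simp
  have hz1 : z ≠ 1 := by
    rw [hz]
    intro h
    rw [Complex.exp_eq_one_iff] at h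
    obtain ⟨n, hn⟩ := h
    have hpi : (π:ℂ) ≠ 0 := by exact_mod_cast Real.pi_ne_zero
    have hdc : (d : ℂ) = n * N := by
      field_simp at hn
      have h2 : ((2:ℂ) * π * Complex.I) ≠ 0 := by
        simp [hpi, Complex.I_ne_zero]
      -- hn should be an equation; massage
      apply mul_left_cancel₀ h2
      linear_combination (2 * (π:ℂ) * Complex.I) * hn
    have hdz : d = n * N := by exact_mod_cast hdc
    have hdvd : (N:ℤ) ∣ d := ⟨n, by linarith [hdz, mul_comm n (N:ℤ)]⟩
    have := Int.eq_zero_of_abs_lt_dvd hdvd hdN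
    exact hd this
  have hzN : z ^ N = 1 := by
    rw [hz, ← Complex.exp_nat_mul]
    have : (N:ℂ) * (2 * π * Complex.I * d / N) = d * (2 * π * Complex.I) := by
      field_simp
    rw [this, Complex.exp_int_mul_two_pi_mul_I]
  calc ∑ p ∈ Finset.range N, Complex.exp (2 * π * Complex.I * d * p / N)
      = ∑ p ∈ Finset.range N, z ^ p := by simp [hzp]
    _ = (z ^ N - 1) / (z - 1) := geom_sum_eq hz1 N
    _ = 0 := by rw [hzN]; simp

lemma swap4 {M : Type*} [AddCommMonoid M] (R1 R2 : Finset ℕ) (B1 B2 : Finset (ℤ × ℤ))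
    (f : ℕ → ℕ → ℤ × ℤ → ℤ × ℤ → M) :
    ∑ p ∈ R1, ∑ q ∈ R2, ∑ jk ∈ B1, ∑ lm ∈ B2, f p q jk lm
      = ∑ jk ∈ B1, ∑ lm ∈ B2, ∑ p ∈ R1, ∑ q ∈ R2, f p q jk lm := by
  calc ∑ p ∈ R1, ∑ q ∈ R2, ∑ jk ∈ B1, ∑ lm ∈ B2, f p q jk lm
      = ∑ p ∈ R1, ∑ jk ∈ B1, ∑ q ∈ R2, ∑ lm ∈ B2, f p q jk lm :=
        Finset.sum_congr rfl fun p _ => Finset.sum_comm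
    _ = ∑ jk ∈ B1, ∑ p ∈ R1, ∑ q ∈ R2, ∑ lm ∈ B2, f p q jk lm := Finset.sum_comm
    _ = ∑ jk ∈ B1, ∑ p ∈ R1, ∑ lm ∈ B2, ∑ q ∈ R2, f p q jk lm :=
        Finset.sum_congr rfl fun jk _ => Finset.sum_congr rfl fun p _ => Finset.sum_comm
    _ = ∑ jk ∈ B1, ∑ lm ∈ B2, ∑ p ∈ R1, ∑ q ∈ R2, f p q jk lm :=
        Finset.sum_congr rfl fun jk _ => Finset.sum_comm

lemma parseval_discrete (N : ℕ) (b : ℤ × ℤ → ℂ)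
    (B : Finset (ℤ × ℤ)) (hB : B = Finset.Ico (0:ℤ) N ×ˢ Finset.Ico (0:ℤ) N) :
    ∑ p ∈ Finset.range N, ∑ q ∈ Finset.range N,
      (∑ jk ∈ B, b jk * Complex.exp (2 * π * Complex.I * (jk.1 * p + jk.2 * q) / N)) *
        (starRingEnd ℂ) (∑ jk ∈ B, b jk * Complex.exp (2 * π * Complex.I * (jk.1 * p + jk.2 * q) / N))
    = (N:ℂ)^2 * ∑ jk ∈ B, b jk * (starRingEnd ℂ) (b jk) := by
  have key : ∀ (jk lm : ℤ × ℤ), ∀ p q : ℕ,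
      (b jk * Complex.exp (2 * π * Complex.I * (jk.1 * p + jk.2 * q) / N)) *
        (starRingEnd ℂ) (b lm * Complex.exp (2 * π * Complex.I * (lm.1 * p + lm.2 * q) / N))
      = (b jk * (starRingEnd ℂ) (b lm)) *
          (Complex.exp (2 * π * Complex.I * (jk.1 - lm.1) * p / N) *
           Complex.exp (2 * π * Complex.I * (jk.2 - lm.2) * q / N)) := by
    intro jk lm p q
    have hconj : (starRingEnd ℂ) (2 * π * Complex.I * (lm.1 * p + lm.2 * q) / N)
        = -(2 * π * Complex.I * (lm.1 * p + lm.2 * q) / N) := by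
      simp only [map_div₀, map_mul, map_add, Complex.conj_I, Complex.conj_ofReal, map_intCast,
        map_natCast, map_ofNat]
      ring
    rw [map_mul, ← Complex.exp_conj, hconj, mul_mul_mul_comm]
    congr 1
    rw [← Complex.exp_add, ← Complex.exp_add]
    congr 1
    ring
  have expand : ∀ p q : ℕ,
      (∑ jk ∈ B, b jk * Complex.exp (2 * π * Complex.I * (jk.1 * p + jk.2 * q) / N)) *
        (starRingEnd ℂ) (∑ jk ∈ B, b jk * Complex.exp (2 * π * Complex.I * (jk.1 * p + jk.2 * q) / N))
      = ∑ jk ∈ B, ∑ lm ∈ B, (b jk * (starRingEnd ℂ) (b lm)) *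
          (Complex.exp (2 * π * Complex.I * (jk.1 - lm.1) * p / N) *
           Complex.exp (2 * π * Complex.I * (jk.2 - lm.2) * q / N)) := by
    intro p q
    rw [map_sum, Finset.sum_mul_sum]
    exact Finset.sum_congr rfl fun jk _ => Finset.sum_congr rfl fun lm _ => key jk lm p q
  simp_rw [expand]
  rw [swap4]
  rw [Finset.mul_sum]
  refine Finset.sum_congr rfl fun jk hjk => ?_
  have hfact : ∀ lm : ℤ × ℤ, ∑ p ∈ Finset.range N, ∑ q ∈ Finset.range N,
      (b jk * (starRingEnd ℂ) (b lm)) *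
        (Complex.exp (2 * π * Complex.I * (jk.1 - lm.1) * p / N) *
         Complex.exp (2 * π * Complex.I * (jk.2 - lm.2) * q / N))
      = (b jk * (starRingEnd ℂ) (b lm)) *
          ((∑ p ∈ Finset.range N, Complex.exp (2 * π * Complex.I * (jk.1 - lm.1) * p / N)) *
           (∑ q ∈ Finset.range N, Complex.exp (2 * π * Complex.I * (jk.2 - lm.2) * q / N))) := by
    intro lm
    rw [Finset.sum_mul_sum, Finset.mul_sum]
    exact Finset.sum_congr rfl fun p _ => by rw [Finset.mul_sum]
  simp_rw [hfact]
  rw [Finset.sum_eq_single jk]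
  · simp only [sub_self, zero_mul, mul_zero, zero_div, Complex.exp_zero, mul_one,
      Finset.sum_const, Finset.card_range, nsmul_eq_mul]
    ring
  · intro lm hlm hne
    rw [hB] at hjk hlm
    simp only [Finset.mem_product, Finset.mem_Ico] at hjk hlm
    have hcase : jk.1 - lm.1 ≠ 0 ∨ jk.2 - lm.2 ≠ 0 := by
      by_contra h
      push_neg at h
      exact hne (Prod.ext (by linarith [h.1]) (by linarith [h.2])).symm
    rcases hcase with h1 | h2
    · have h0 := orth_ne N (jk.1 - lm.1) h1 (by rw [abs_sub_lt_iff]; omega)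
      push_cast at h0
      rw [h0]
      ring
    · have h0 := orth_ne N (jk.2 - lm.2) h2 (by rw [abs_sub_lt_iff]; omega)
      push_cast at h0
      rw [h0]
      ring
  · intro h
    exact absurd hjk h

lemma finsum_sq_le (a : ℤ × ℤ → ℂ) (ha : Summable fun jk : ℤ × ℤ => ‖a jk‖)
    (hsupp : ∀ j k : ℤ, (j < 0 ∨ k < 0) → a (j, k) = 0) (M : ℝ)
    (hM : ∀ x t : ℝ, ‖∑' jk : ℤ × ℤ, a jk * Complex.exp (Complex.I * (2 * jk.1 * x + jk.2 * t))‖ ≤ M)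
    (F : Finset (ℤ × ℤ)) : ∑ jk ∈ F, ‖a jk‖ ^ 2 ≤ M ^ 2 := by
  classical
  have hM0 : 0 ≤ M := le_trans (norm_nonneg _) (hM 0 0)
  have hnorm : ∀ (x t : ℝ) (jk : ℤ × ℤ),
      ‖a jk * Complex.exp (Complex.I * (2 * jk.1 * x + jk.2 * t))‖ = ‖a jk‖ := by
    intro x t jk
    rw [norm_mul]
    have : (Complex.I * (2 * jk.1 * x + jk.2 * t)) = Complex.I * ((2 * jk.1 * x + jk.2 * t : ℝ) : ℂ) := by
      push_cast; ring
    rw [this]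
    simp [Complex.norm_exp]
  have hfsummable : ∀ x t : ℝ, Summable fun jk : ℤ × ℤ => a jk * Complex.exp (Complex.I * (2 * jk.1 * x + jk.2 * t)) := by
    intro x t
    apply Summable.of_norm
    simpa only [hnorm x t] using ha
  have hquad : ∀ jk : ℤ × ℤ, ‖a jk‖ ≠ 0 → 0 ≤ jk.1 ∧ 0 ≤ jk.2 := by
    intro jk hne
    by_contra hq
    push_neg at hq
    rcases le_or_gt 0 jk.1 with h1 | h1
    · exact hne (by rw [show jk = (jk.1, jk.2) from rfl, hsupp _ _ (Or.inr (hq h1))]; simp)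
    · exact hne (by rw [show jk = (jk.1, jk.2) from rfl, hsupp _ _ (Or.inl h1)]; simp)
  have main : ∀ ε : ℝ, 0 < ε → ∑ jk ∈ F, ‖a jk‖ ^ 2 ≤ (M + ε) ^ 2 := by
    intro ε hε
    obtain ⟨s, hs⟩ := summable_iff_vanishing.mp ha (Set.Iio ε) (Iio_mem_nhds hε)
    set N : ℕ := 1 + (F ∪ s).sup (fun jk => jk.1.toNat ⊔ jk.2.toNat) with hN
    have hNbig : ∀ jk ∈ F ∪ s, jk.1 < (N:ℤ) ∧ jk.2 < (N:ℤ) := by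
      intro jk hjk
      have h1 : jk.1.toNat ⊔ jk.2.toNat ≤ (F ∪ s).sup (fun jk => jk.1.toNat ⊔ jk.2.toNat) :=
        Finset.le_sup (f := fun jk => jk.1.toNat ⊔ jk.2.toNat) hjk
      constructor
      · have := le_trans (le_sup_left : jk.1.toNat ≤ _) h1
        omega
      · have := le_trans (le_sup_right : jk.2.toNat ≤ _) h1
        omega
    have hN1 : 0 < N := Nat.succ_le_iff.mp (Nat.le_add_right 1 _)
    set B : Finset (ℤ × ℤ) := Finset.Ico (0:ℤ) N ×ˢ Finset.Ico (0:ℤ) N with hBdef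
    have htail : ∑' (i : ↑(↑B : Set (ℤ × ℤ))ᶜ), ‖a ↑i‖ ≤ ε := by
      apply Summable.tsum_le_of_sum_le (ha.subtype _)
      intro t
      show ∑ i ∈ t, ‖a ↑i‖ ≤ ε
      have himg : ∑ i ∈ t, ‖a ↑i‖ = ∑ jk ∈ t.image Subtype.val, ‖a jk‖ := by
        rw [Finset.sum_image]
        intro x _ y _ h
        exact Subtype.ext h
      rw [himg]
      have hfilter : ∑ jk ∈ (t.image Subtype.val).filter (fun jk => 0 ≤ jk.1 ∧ 0 ≤ jk.2), ‖a jk‖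
          = ∑ jk ∈ t.image Subtype.val, ‖a jk‖ :=
        Finset.sum_filter_of_ne fun jk _ hne => hquad jk hne
      rw [← hfilter]
      have hdisj : Disjoint ((t.image Subtype.val).filter (fun jk => 0 ≤ jk.1 ∧ 0 ≤ jk.2)) s := by
        rw [Finset.disjoint_left]
        intro jk hjk hjs
        simp only [Finset.mem_filter, Finset.mem_image] at hjk
        obtain ⟨⟨x, hx, hxval⟩, hq1, hq2⟩ := hjk
        have hxB : jk ∈ B := by
          rw [hBdef]
          simp only [Finset.mem_product, Finset.mem_Ico]
          have := hNbig jk (Finset.mem_union_right F hjs)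
          exact ⟨⟨hq1, this.1⟩, hq2, this.2⟩
        have hmem : (x : ℤ × ℤ) ∈ (↑B : Set (ℤ × ℤ))ᶜ := x.2
        rw [hxval] at hmem
        exact hmem hxB
      exact le_of_lt (hs _ hdisj)
    have hP : ∀ x t : ℝ, ‖∑ jk ∈ B, a jk * Complex.exp (Complex.I * (2 * jk.1 * x + jk.2 * t))‖ ≤ M + ε := by
      intro x t
      have hsum := Summable.sum_add_tsum_compl (s := B) (hfsummable x t)
      have heq : ∑ jk ∈ B, a jk * Complex.exp (Complex.I * (2 * jk.1 * x + jk.2 * t))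
          = (∑' jk : ℤ × ℤ, a jk * Complex.exp (Complex.I * (2 * jk.1 * x + jk.2 * t)))
            - ∑' (i : ↑(↑B : Set (ℤ × ℤ))ᶜ), a ↑i * Complex.exp (Complex.I * (2 * (i:ℤ×ℤ).1 * x + (i:ℤ×ℤ).2 * t)) := by
        rw [← hsum]; ring
      rw [heq]
      refine (norm_sub_le _ _).trans ?_
      have ht1 : ‖∑' (i : ↑(↑B : Set (ℤ × ℤ))ᶜ), a ↑i * Complex.exp (Complex.I * (2 * (i:ℤ×ℤ).1 * x + (i:ℤ×ℤ).2 * t))‖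
          ≤ ε := by
        refine le_trans (norm_tsum_le_tsum_norm ?_) ?_
        · have := (ha.subtype ((↑B : Set (ℤ × ℤ))ᶜ))
          apply Summable.congr this
          intro i
          exact (hnorm x t ↑i).symm
        · refine le_trans (le_of_eq (tsum_congr fun i => hnorm x t ↑i)) htail
      exact add_le_add (hM x t) ht1
    -- discrete Parseval
    have hps := parseval_discrete N a B hBdef
    simp_rw [Complex.mul_conj] at hps
    have hreal : ∑ p ∈ Finset.range N, ∑ q ∈ Finset.range N,
        Complex.normSq (∑ jk ∈ B, a jk * Complex.exp (2 * π * Complex.I * (jk.1 * p + jk.2 * q) / N))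
        = (N:ℝ)^2 * ∑ jk ∈ B, Complex.normSq (a jk) := by
      exact_mod_cast hps
    have hphase : ∀ p q : ℕ,
        (∑ jk ∈ B, a jk * Complex.exp (2 * π * Complex.I * (jk.1 * p + jk.2 * q) / N))
        = ∑ jk ∈ B, a jk * Complex.exp (Complex.I * (2 * jk.1 * ((π * p / N : ℝ) : ℂ) + jk.2 * ((2 * π * q / N : ℝ) : ℂ))) := by
      intro p q
      refine Finset.sum_congr rfl fun jk _ => ?_
      congr 1
      congr 1
      push_cast
      have hNc : (N:ℂ) ≠ 0 := Nat.cast_ne_zero.mpr hN1.ne'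
      field_simp
    have hbound : ∀ p ∈ Finset.range N, ∀ q ∈ Finset.range N,
        Complex.normSq (∑ jk ∈ B, a jk * Complex.exp (2 * π * Complex.I * (jk.1 * p + jk.2 * q) / N))
          ≤ (M + ε)^2 := by
      intro p _ q _
      rw [hphase p q]
      have h1 := hP (π * p / N) (2 * π * q / N)
      have h2 : Complex.normSq (∑ jk ∈ B, a jk * Complex.exp (Complex.I * (2 * jk.1 * ((π * p / N : ℝ) : ℂ) + jk.2 * ((2 * π * q / N : ℝ) : ℂ))))
          = ‖∑ jk ∈ B, a jk * Complex.exp (Complex.I * (2 * jk.1 * ((π * p / N : ℝ) : ℂ) + jk.2 * ((2 * π * q / N : ℝ) : ℂ)))‖ ^ 2 := by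
        rw [Complex.normSq_eq_norm_sq]
      rw [h2]
      exact pow_le_pow_left₀ (norm_nonneg _) h1 2
    have hsumbound : (N:ℝ)^2 * ∑ jk ∈ B, Complex.normSq (a jk) ≤ (N:ℝ)^2 * (M + ε)^2 := by
      rw [← hreal]
      calc ∑ p ∈ Finset.range N, ∑ q ∈ Finset.range N,
            Complex.normSq (∑ jk ∈ B, a jk * Complex.exp (2 * π * Complex.I * (jk.1 * p + jk.2 * q) / N))
          ≤ ∑ p ∈ Finset.range N, ∑ q ∈ Finset.range N, (M + ε)^2 := by
            refine Finset.sum_le_sum fun p hp => Finset.sum_le_sum fun q hq => hbound p hp q hq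
        _ = (N:ℝ)^2 * (M + ε)^2 := by
            simp [Finset.sum_const, Finset.card_range]
            ring
    have hN2 : (0:ℝ) < (N:ℝ)^2 := by positivity
    have hBsum : ∑ jk ∈ B, Complex.normSq (a jk) ≤ (M + ε)^2 :=
      le_of_mul_le_mul_left hsumbound hN2
    have hBsum' : ∑ jk ∈ B, ‖a jk‖^2 ≤ (M + ε)^2 := by
      refine le_trans (le_of_eq ?_) hBsum
      exact Finset.sum_congr rfl fun jk _ => by rw [Complex.normSq_eq_norm_sq]
    have hFfilter : ∑ jk ∈ F, ‖a jk‖^2 = ∑ jk ∈ F.filter (fun jk => 0 ≤ jk.1 ∧ 0 ≤ jk.2), ‖a jk‖^2 := by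
      refine (Finset.sum_filter_of_ne fun jk _ hne => hquad jk ?_).symm
      intro h0
      exact hne (by rw [h0]; ring)
    rw [hFfilter]
    refine le_trans (Finset.sum_le_sum_of_subset_of_nonneg ?_ fun jk _ _ => sq_nonneg _) hBsum'
    intro jk hjk
    simp only [Finset.mem_filter] at hjk
    rw [hBdef]
    simp only [Finset.mem_product, Finset.mem_Ico]
    have := hNbig jk (Finset.mem_union_left s hjk.1)
    exact ⟨⟨hjk.2.1, this.1⟩, hjk.2.2, this.2⟩
  -- conclude
  by_contra hcon
  push_neg at hcon
  set x := ∑ jk ∈ F, ‖a jk‖ ^ 2 with hx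
  have hδ : 0 < x - M ^ 2 := by linarith
  have hden : (0:ℝ) < 2 * M + (x - M ^ 2) + 1 := by linarith
  have hε : 0 < (x - M ^ 2) / (2 * M + (x - M ^ 2) + 1) := div_pos hδ hden
  have hle := main _ hε
  set ε := (x - M ^ 2) / (2 * M + (x - M ^ 2) + 1) with hεdef
  have hεle : ε * (2 * M + (x - M ^ 2) + 1) = x - M ^ 2 := div_mul_cancel₀ _ hden.ne'
  have hε1 : ε < 1 := (div_lt_one hden).mpr (by linarith)
  nlinarith [hεle, hε1, hε, hM0, hcon, sq_nonneg ε]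

lemma block_bound (uh : ℤ × ℤ → ℂ) (ha : Summable fun jk : ℤ × ℤ => ‖uh jk‖)
    (hsupp : ∀ j k : ℤ, (j < 0 ∨ k < 0) → uh (j, k) = 0)
    (u : ℝ × ℝ → ℂ)
    (hu : ∀ x t : ℝ, u (x, t) = ∑' jk : ℤ × ℤ,
      uh jk * Complex.exp (Complex.I * (2 * jk.1 * x + jk.2 * t)))
    (K : NNReal) (γ : ℝ) (hγ0 : 0 < γ) (hγ1 : γ ≤ 1)
    (hK : HolderWith K (Real.toNNReal γ) u)
    (m : ℕ) (G : Finset (ℤ × ℤ))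
    (hG : ∀ jk ∈ G, (2^m : ℤ) ≤ 2 * jk.1 + jk.2 ∧ 2 * jk.1 + jk.2 ≤ 2^(m+1)) :
    ∑ jk ∈ G, ‖uh jk‖ ^ 2 ≤ (1/3) * ((K : ℝ) * ((2 * π / 3) * ((2:ℝ)^m)⁻¹) ^ γ) ^ 2 := by
  classical
  set h : ℝ := (2 * π / 3) * ((2:ℝ)^m)⁻¹ with hh
  have hπ := Real.pi_pos
  have h2m : (0:ℝ) < (2:ℝ)^m := by positivity
  have hhpos : 0 < h := by rw [hh]; positivity
  set a : ℤ × ℤ → ℂ := fun jk =>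
    uh jk * (Complex.exp (Complex.I * ((2 * jk.1 + jk.2) * (h:ℂ))) - 1) with hadef
  -- the modulation factor has norm ≤ 2
  have hfac : ∀ jk : ℤ × ℤ, ‖Complex.exp (Complex.I * ((2 * jk.1 + jk.2) * (h:ℂ))) - 1‖ ≤ 2 := by
    intro jk
    refine (norm_sub_le _ _).trans ?_
    have : ‖Complex.exp (Complex.I * ((2 * jk.1 + jk.2) * (h:ℂ)))‖ = 1 := by
      have : Complex.I * ((2 * jk.1 + jk.2) * (h:ℂ))
          = Complex.I * (((2 * jk.1 + jk.2 : ℤ) * h : ℝ) : ℂ) := by push_cast; ring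
      rw [this]
      simp [Complex.norm_exp]
    rw [this]; norm_num
  have hasum : Summable fun jk : ℤ × ℤ => ‖a jk‖ := by
    refine Summable.of_nonneg_of_le (fun jk => norm_nonneg _) (fun jk => ?_) (ha.mul_right 2)
    rw [hadef, norm_mul]
    exact mul_le_mul_of_nonneg_left (hfac jk) (norm_nonneg _)
  have hasupp : ∀ j k : ℤ, (j < 0 ∨ k < 0) → a (j, k) = 0 := by
    intro j k hjk
    rw [hadef]
    simp [hsupp j k hjk]
  -- the pointwise bound
  have hnormexp : ∀ (x t : ℝ) (jk : ℤ × ℤ), Summable (fun jk : ℤ × ℤ =>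
      uh jk * Complex.exp (Complex.I * (2 * jk.1 * x + jk.2 * t))) := by
    intro x t _
    apply Summable.of_norm
    apply Summable.congr ha
    intro jk
    rw [norm_mul]
    have : (Complex.I * (2 * jk.1 * x + jk.2 * t)) = Complex.I * ((2 * jk.1 * x + jk.2 * t : ℝ) : ℂ) := by
      push_cast; ring
    rw [this]
    simp [Complex.norm_exp]
  have hM : ∀ x t : ℝ, ‖∑' jk : ℤ × ℤ, a jk * Complex.exp (Complex.I * (2 * jk.1 * x + jk.2 * t))‖
      ≤ (K : ℝ) * h ^ γ := by
    intro x t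
    have hterm : ∀ jk : ℤ × ℤ, a jk * Complex.exp (Complex.I * (2 * jk.1 * x + jk.2 * t))
        = uh jk * Complex.exp (Complex.I * (2 * jk.1 * ((x + h : ℝ) : ℂ) + jk.2 * ((t + h : ℝ) : ℂ)))
          - uh jk * Complex.exp (Complex.I * (2 * jk.1 * x + jk.2 * t)) := by
      intro jk
      rw [hadef]
      have : Complex.I * (2 * jk.1 * ((x + h : ℝ) : ℂ) + jk.2 * ((t + h : ℝ) : ℂ))
          = Complex.I * ((2 * jk.1 + jk.2) * (h:ℂ)) + Complex.I * (2 * jk.1 * x + jk.2 * t) := by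
        push_cast; ring
      rw [this, Complex.exp_add]
      ring
    have hsum1 := hnormexp (x + h) (t + h) (0,0)
    have hsum2 := hnormexp x t (0,0)
    have hsum1' : Summable fun jk : ℤ × ℤ =>
        uh jk * Complex.exp (Complex.I * (2 * jk.1 * ((x + h : ℝ) : ℂ) + jk.2 * ((t + h : ℝ) : ℂ))) := by
      exact_mod_cast hsum1
    calc ‖∑' jk : ℤ × ℤ, a jk * Complex.exp (Complex.I * (2 * jk.1 * x + jk.2 * t))‖
        = ‖u (x + h, t + h) - u (x, t)‖ := by
          rw [tsum_congr hterm, Summable.tsum_sub hsum1' hsum2, hu (x+h) (t+h), hu x t]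
      _ = dist (u (x + h, t + h)) (u (x, t)) := (dist_eq_norm _ _).symm
      _ ≤ (K : ℝ) * dist ((x + h : ℝ), (t + h : ℝ)) ((x : ℝ), (t : ℝ)) ^ ((Real.toNNReal γ : NNReal) : ℝ) :=
          hK.dist_le _ _
      _ = (K : ℝ) * h ^ γ := by
          rw [Prod.dist_eq]
          simp only [Real.dist_eq]
          rw [show x + h - x = h by ring, show t + h - t = h by ring, max_self,
            abs_of_pos hhpos, Real.coe_toNNReal γ hγ0.le]
  have hmain := finsum_sq_le a hasum hasupp ((K : ℝ) * h ^ γ) hM G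
  have hper : ∀ jk ∈ G, ‖uh jk‖ ^ 2 ≤ (1/3) * ‖a jk‖ ^ 2 := by
    intro jk hjk
    obtain ⟨hn1, hn2⟩ := hG jk hjk
    set n : ℤ := 2 * jk.1 + jk.2 with hn
    set θ : ℝ := (n : ℝ) * h with hθ
    have hcast1 : ((2:ℝ)^m) ≤ (n : ℝ) := by exact_mod_cast hn1
    have hcast2 : (n : ℝ) ≤ 2 * (2:ℝ)^m := by
      have : (n : ℝ) ≤ ((2:ℤ)^(m+1) : ℤ) := by exact_mod_cast hn2
      push_cast at this
      rw [pow_succ] at this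
      linarith [this]
    have h2mh : (2:ℝ)^m * h = 2 * π / 3 := by
      rw [hh]; field_simp
    have hθlb : 2 * π / 3 ≤ θ := by
      rw [hθ, ← h2mh]
      exact mul_le_mul_of_nonneg_right hcast1 hhpos.le
    have hθub : θ ≤ 4 * π / 3 := by
      rw [hθ]
      calc (n:ℝ) * h ≤ (2 * (2:ℝ)^m) * h := mul_le_mul_of_nonneg_right hcast2 hhpos.le
        _ = 4 * π / 3 := by rw [mul_assoc, h2mh]; ring
    have habs : |θ - π| ≤ π / 3 := abs_le.mpr ⟨by linarith, by linarith⟩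
    have hcos : Real.cos θ ≤ -(1/2) := by
      have h2 : Real.cos (π/3) ≤ Real.cos |θ - π| :=
        Real.cos_le_cos_of_nonneg_of_le_pi (abs_nonneg _) (by linarith) habs
      rw [Real.cos_abs, Real.cos_pi_div_three] at h2
      have h3 : Real.cos (θ - π) = - Real.cos θ := by
        rw [show θ - π = -(π - θ) by ring, Real.cos_neg, Real.cos_pi_sub]
      linarith
    have hexp : Complex.exp (Complex.I * ((2 * jk.1 + jk.2) * (h:ℂ))) - 1
        = ((Real.cos θ - 1 : ℝ) : ℂ) + ((Real.sin θ : ℝ) : ℂ) * Complex.I := by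
      have harg : Complex.I * ((2 * jk.1 + jk.2) * (h:ℂ)) = (θ:ℂ) * Complex.I := by
        rw [hθ, hn]; push_cast; ring
      rw [harg, Complex.exp_mul_I]
      push_cast
      ring_nf
    have hnsq : ‖Complex.exp (Complex.I * ((2 * jk.1 + jk.2) * (h:ℂ))) - 1‖ ^ 2 = 2 - 2 * Real.cos θ := by
      rw [hexp, ← Complex.normSq_eq_norm_sq, Complex.normSq_add_mul_I]
      nlinarith [Real.sin_sq_add_cos_sq θ]
    have h3le : (3:ℝ) ≤ ‖Complex.exp (Complex.I * ((2 * jk.1 + jk.2) * (h:ℂ))) - 1‖ ^ 2 := by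
      rw [hnsq]; linarith
    have : ‖a jk‖ ^ 2 = ‖uh jk‖ ^ 2 * ‖Complex.exp (Complex.I * ((2 * jk.1 + jk.2) * (h:ℂ))) - 1‖ ^ 2 := by
      rw [hadef]
      simp only [norm_mul, mul_pow]
    rw [this]
    nlinarith [sq_nonneg (‖uh jk‖), norm_nonneg (uh jk), h3le]
  calc ∑ jk ∈ G, ‖uh jk‖ ^ 2 ≤ ∑ jk ∈ G, (1/3) * ‖a jk‖ ^ 2 := Finset.sum_le_sum hper
    _ = (1/3) * ∑ jk ∈ G, ‖a jk‖ ^ 2 := by rw [← Finset.mul_sum]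
    _ ≤ (1/3) * ((K : ℝ) * h ^ γ) ^ 2 := by
        have := hmain
        linarith

lemma pow_arith (γ γ' : ℝ) (hγ1 : γ ≤ 1) (hγ'0 : 0 < γ') (hγ'γ : γ' < γ) (m : ℕ) :
    ((2:ℝ)^(m+1)) ^ (2*γ') * (((2 * π / 3) * ((2:ℝ)^m)⁻¹) ^ γ) ^ 2
      ≤ 20 * ((2:ℝ) ^ (-(2*(γ-γ')))) ^ m := by
  have hπ := Real.pi_pos
  have h2m : (0:ℝ) < (2:ℝ)^m := by positivity
  have hb : (1:ℝ) ≤ 2 * π / 3 := by nlinarith [Real.pi_gt_three]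
  have key2 : ∀ s t : ℝ, ((2:ℝ) ^ s) ^ t = (2:ℝ) ^ (s * t) :=
    fun s t => (Real.rpow_mul (by norm_num) s t).symm
  have keyn : ∀ (s : ℝ) (k : ℕ), ((2:ℝ) ^ s) ^ k = (2:ℝ) ^ (s * k) := by
    intro s k
    rw [← Real.rpow_natCast ((2:ℝ) ^ s) k, key2]
  have keyb : ∀ (s : ℝ) (k : ℕ), ((2 * π / 3 : ℝ) ^ s) ^ k = (2 * π / 3 : ℝ) ^ (s * (k:ℝ)) := by
    intro s k
    rw [← Real.rpow_natCast ((2 * π / 3 : ℝ) ^ s) k, ← Real.rpow_mul (by positivity)]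
  have e1 : ((2:ℝ)^(m+1)) ^ (2*γ') = (2:ℝ) ^ ((((m:ℝ))+1) * (2*γ')) := by
    rw [show ((2:ℝ)^(m+1) : ℝ) = (2:ℝ) ^ (((m+1:ℕ)):ℝ) from (Real.rpow_natCast 2 (m+1)).symm, key2]
    push_cast
    ring_nf
  have einv : ((2 * π / 3) * ((2:ℝ)^m)⁻¹) = (2 * π / 3) * (2:ℝ) ^ (-(m:ℝ)) := by
    rw [show ((2:ℝ)^m : ℝ) = (2:ℝ) ^ ((m:ℕ):ℝ) from (Real.rpow_natCast 2 m).symm,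
      ← Real.rpow_neg (by norm_num)]
  have e2 : (((2 * π / 3) * ((2:ℝ)^m)⁻¹) ^ γ) ^ 2
      = (2 * π / 3) ^ (γ * 2) * (2:ℝ) ^ (-(m:ℝ) * γ * 2) := by
    rw [einv, Real.mul_rpow (by positivity) (by positivity), mul_pow, keyb, key2, keyn]
    norm_num
  have e3 : ((2:ℝ) ^ (-(2*(γ-γ')))) ^ m = (2:ℝ) ^ (-(2*(γ-γ')) * (m:ℝ)) := keyn _ m
  rw [e1, e2, e3]
  have hA : (2 * π / 3 : ℝ) ^ (γ * 2) ≤ 5 := by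
    have h1 : (2 * π / 3 : ℝ) ^ (γ * 2) ≤ (2 * π / 3 : ℝ) ^ ((2:ℕ):ℝ) :=
      Real.rpow_le_rpow_of_exponent_le hb (by push_cast; linarith)
    rw [Real.rpow_natCast] at h1
    nlinarith [Real.pi_lt_d2]
  have hB : (2:ℝ) ^ ((((m:ℝ))+1) * (2*γ')) * (2:ℝ) ^ (-(m:ℝ) * γ * 2)
      ≤ 4 * (2:ℝ) ^ (-(2*(γ-γ')) * (m:ℝ)) := by
    rw [← Real.rpow_add (by norm_num)]
    have hle : (((m:ℝ))+1) * (2*γ') + (-(m:ℝ) * γ * 2) ≤ 2 + (-(2*(γ-γ')) * (m:ℝ)) := by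
      have hm0 : (0:ℝ) ≤ (m:ℝ) := Nat.cast_nonneg m
      nlinarith
    calc (2:ℝ) ^ ((((m:ℝ))+1) * (2*γ') + (-(m:ℝ) * γ * 2))
        ≤ (2:ℝ) ^ (2 + (-(2*(γ-γ')) * (m:ℝ))) :=
          Real.rpow_le_rpow_of_exponent_le (by norm_num) hle
      _ = 4 * (2:ℝ) ^ (-(2*(γ-γ')) * (m:ℝ)) := by
          rw [Real.rpow_add (by norm_num)]
          norm_num
  have hrp : (0:ℝ) ≤ (2:ℝ) ^ (-(2*(γ-γ')) * (m:ℝ)) := (Real.rpow_pos_of_pos (by norm_num) _).le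
  have hBpos : (0:ℝ) ≤ (2:ℝ) ^ ((((m:ℝ))+1) * (2*γ')) * (2:ℝ) ^ (-(m:ℝ) * γ * 2) := by positivity
  calc (2:ℝ) ^ ((((m:ℝ))+1) * (2*γ')) * ((2 * π / 3) ^ (γ * 2) * (2:ℝ) ^ (-(m:ℝ) * γ * 2))
      = (2 * π / 3) ^ (γ * 2) * ((2:ℝ) ^ ((((m:ℝ))+1) * (2*γ')) * (2:ℝ) ^ (-(m:ℝ) * γ * 2)) := by ring
    _ ≤ 5 * (4 * (2:ℝ) ^ (-(2*(γ-γ')) * (m:ℝ))) := by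
        apply mul_le_mul hA hB hBpos (by norm_num)
    _ = 20 * (2:ℝ) ^ (-(2*(γ-γ')) * (m:ℝ)) := by ring

lemma geom_bound (γ γ' : ℝ) (hγ1 : γ ≤ 1) (hγ'0 : 0 < γ') (hγ'γ : γ' < γ) (MM : ℕ) :
    ∑ m ∈ Finset.range MM, ((2:ℝ) ^ (-(2*(γ-γ')))) ^ m ≤ 3 / (γ - γ') := by
  set δ : ℝ := γ - γ' with hδdef
  have hδ : 0 < δ := by rw [hδdef]; linarith
  have hδ1 : δ < 1 := by rw [hδdef]; linarith
  set r : ℝ := (2:ℝ) ^ (-(2*δ)) with hrdef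
  have hr0 : 0 < r := Real.rpow_pos_of_pos (by norm_num) _
  have hr1 : r < 1 := Real.rpow_lt_one_of_one_lt_of_neg (by norm_num) (by linarith)
  have hsum : ∑ m ∈ Finset.range MM, r ^ m ≤ 1 / (1 - r) := by
    rw [geom_sum_eq hr1.ne MM]
    have heq : (r ^ MM - 1) / (r - 1) = (1 - r ^ MM) / (1 - r) := by
      rw [div_eq_div_iff (sub_ne_zero.mpr hr1.ne) (sub_ne_zero.mpr (ne_of_gt (by linarith)))]
      ring
    rw [heq]
    exact (div_le_div_iff_of_pos_right (by linarith)).mpr (by nlinarith [pow_nonneg hr0.le MM])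
  have hrexp : r = Real.exp (-(2 * δ * Real.log 2)) := by
    rw [hrdef, Real.rpow_def_of_pos (by norm_num)]
    ring_nf
  have hlog2a : Real.log 2 < 0.6931471808 := by
    have := Real.log_two_lt_d9; linarith
  have hlog2b : (0.6931471803:ℝ) < Real.log 2 := Real.log_two_gt_d9
  set y : ℝ := 2 * δ * Real.log 2 with hy
  have hy0 : 0 < y := by rw [hy]; positivity
  have hy1 : y < 2 := by rw [hy]; nlinarith
  have hyδ : δ ≤ y := by rw [hy]; nlinarith
  have hexp : Real.exp (-y) ≤ 1 / (1 + y) := by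
    rw [Real.exp_neg, one_div]
    exact inv_anti₀ (by linarith) (by linarith [Real.add_one_le_exp y])
  have h3 : 1 - 1/(1+y) = y/(1+y) := by field_simp; ring
  have hdiv : δ / 3 ≤ y / (1 + y) := div_le_div₀ hy0.le hyδ (by linarith) (by linarith)
  have h1r : δ / 3 ≤ 1 - r := by
    rw [hrexp]
    linarith
  calc ∑ m ∈ Finset.range MM, r ^ m ≤ 1 / (1 - r) := hsum
    _ ≤ 1 / (δ / 3) := one_div_le_one_div_of_le (by positivity) h1r
    _ = 3 / δ := by
        rw [one_div_div]

end Aux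

/-- A Hölder-continuous function with one-sided spectrum (j ≥ 0, k ≥ 0) belongs to
H^{γ'} for every γ' < γ, with ‖u‖²_{H^{γ'}} ≤ c (γ − γ')⁻¹ ‖u‖²_{C^{0,γ}}. -/
theorem stmt_4 :
    ∃ c > 0, ∀ γ γ' : ℝ, 0 < γ → γ ≤ 1 → 0 < γ' → γ' < γ →
      ∀ uh : ℤ × ℤ → ℂ,
        Summable (fun jk : ℤ × ℤ => ‖uh jk‖) →
        (∀ j k : ℤ, (j < 0 ∨ k < 0) → uh (j, k) = 0) →
        ∀ u : ℝ × ℝ → ℂ,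
          (∀ x t : ℝ, u (x, t) = ∑' jk : ℤ × ℤ,
            uh jk * Complex.exp (Complex.I * (2 * jk.1 * x + jk.2 * t))) →
          ∀ K : NNReal, HolderWith K (Real.toNNReal γ) u →
            Summable (fun jk : ℤ × ℤ =>
              ((2 * |jk.1| + |jk.2| : ℤ) : ℝ) ^ (2 * γ') * ‖uh jk‖ ^ 2) ∧
            ∑' jk : ℤ × ℤ, ((2 * |jk.1| + |jk.2| : ℤ) : ℝ) ^ (2 * γ') * ‖uh jk‖ ^ 2 ≤
              c / (γ - γ') * (K : ℝ) ^ 2 := by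
  classical
  refine ⟨100, by norm_num, ?_⟩
  intro γ γ' hγ0 hγ1 hγ'0 hγ'γ uh ha hsupp u hu K hK
  set f : ℤ × ℤ → ℝ := fun jk => ((2 * |jk.1| + |jk.2| : ℤ) : ℝ) ^ (2 * γ') * ‖uh jk‖ ^ 2 with hfdef
  have hf0 : ∀ jk : ℤ × ℤ, 0 ≤ f jk := by
    intro jk
    apply mul_nonneg _ (sq_nonneg _)
    apply Real.rpow_nonneg
    have : (0:ℤ) ≤ 2 * |jk.1| + |jk.2| := by positivity
    exact_mod_cast this
  have hδ : 0 < γ - γ' := by linarith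
  have hbound : ∀ F : Finset (ℤ × ℤ), ∑ jk ∈ F, f jk ≤ 100 / (γ - γ') * (K : ℝ) ^ 2 := by
    intro F
    have hQ : ∀ jk : ℤ × ℤ, f jk ≠ 0 → (0 ≤ jk.1 ∧ 0 ≤ jk.2 ∧ 1 ≤ 2 * jk.1 + jk.2) := by
      intro jk hne
      by_contra hq
      apply hne
      rcases lt_or_ge jk.1 0 with h1 | h1
      · rw [hfdef]
        simp only
        rw [show jk = (jk.1, jk.2) from rfl, hsupp _ _ (Or.inl h1)]
        simp
      rcases lt_or_ge jk.2 0 with h2 | h2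
      · rw [hfdef]
        simp only
        rw [show jk = (jk.1, jk.2) from rfl, hsupp _ _ (Or.inr h2)]
        simp
      have h3 : 2 * jk.1 + jk.2 < 1 := by
        by_contra h3
        push_neg at h3
        exact hq ⟨h1, h2, h3⟩
      have hj0 : jk.1 = 0 ∧ jk.2 = 0 := by omega
      rw [hfdef]
      simp only
      rw [show (2 * |jk.1| + |jk.2| : ℤ) = 0 by rw [hj0.1, hj0.2]; simp]
      rw [show ((0:ℤ):ℝ) = (0:ℝ) by norm_num, Real.zero_rpow (by positivity)]
      ring
    rw [← Finset.sum_filter_of_ne (p := fun jk : ℤ × ℤ => 0 ≤ jk.1 ∧ 0 ≤ jk.2 ∧ 1 ≤ 2 * jk.1 + jk.2) (fun jk _ => hQ jk)]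
    set Fq := F.filter (fun jk => 0 ≤ jk.1 ∧ 0 ≤ jk.2 ∧ 1 ≤ 2 * jk.1 + jk.2) with hFq
    set g : ℤ × ℤ → ℕ := fun jk => Nat.log 2 (2 * jk.1 + jk.2).toNat with hg
    set MM := Fq.sup g + 1 with hMM
    have hmaps : ∀ jk ∈ Fq, g jk ∈ Finset.range MM :=
      fun jk hjk => Finset.mem_range.mpr (Nat.lt_succ_of_le (Finset.le_sup hjk))
    rw [← Finset.sum_fiberwise_of_maps_to hmaps f]
    set r : ℝ := (2:ℝ) ^ (-(2*(γ-γ'))) with hr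
    have hperm : ∀ m ∈ Finset.range MM,
        ∑ jk ∈ Fq.filter (fun jk => g jk = m), f jk ≤ (20/3) * (K : ℝ)^2 * r ^ m := by
      intro m _
      set Gm := Fq.filter (fun jk => g jk = m) with hGm
      have hGmem : ∀ jk ∈ Gm, (0 ≤ jk.1 ∧ 0 ≤ jk.2 ∧ 1 ≤ 2 * jk.1 + jk.2)
          ∧ ((2^m : ℤ) ≤ 2 * jk.1 + jk.2 ∧ 2 * jk.1 + jk.2 ≤ 2^(m+1)) := by
        intro jk hjk
        rw [hGm, hFq] at hjk
        simp only [Finset.mem_filter] at hjk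
        obtain ⟨⟨_, hq1, hq2, hq3⟩, hgm⟩ := hjk
        refine ⟨⟨hq1, hq2, hq3⟩, ?_⟩
        set n : ℤ := 2 * jk.1 + jk.2 with hn
        have hn0 : n.toNat ≠ 0 := by omega
        have hlow := Nat.pow_log_le_self 2 hn0
        have hhigh := Nat.lt_pow_succ_log_self (by norm_num : 1 < 2) n.toNat
        rw [show Nat.log 2 n.toNat = m from hgm] at hlow hhigh
        have hcast : (n.toNat : ℤ) = n := Int.toNat_of_nonneg (by omega)
        constructor
        · have : ((2^m : ℕ) : ℤ) ≤ (n.toNat : ℤ) := Int.ofNat_le.mpr hlow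
          rw [hcast] at this
          push_cast at this
          exact this
        · have : (n.toNat : ℤ) ≤ ((2^(m+1) : ℕ) : ℤ) := Int.ofNat_le.mpr hhigh.le
          rw [hcast] at this
          push_cast at this
          exact this
      have hblock := block_bound uh ha hsupp u hu K γ hγ0 hγ1 hK m Gm
        (fun jk hjk => (hGmem jk hjk).2)
      have hperterm : ∀ jk ∈ Gm, f jk ≤ ((2:ℝ)^(m+1)) ^ (2*γ') * ‖uh jk‖^2 := by
        intro jk hjk
        obtain ⟨⟨hq1, hq2, _⟩, _, hub⟩ := hGmem jk hjk
        rw [hfdef]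
        simp only
        apply mul_le_mul_of_nonneg_right _ (sq_nonneg _)
        have habs : (2 * |jk.1| + |jk.2| : ℤ) = 2 * jk.1 + jk.2 := by
          rw [abs_of_nonneg hq1, abs_of_nonneg hq2]
        rw [habs]
        have hble : ((2 * jk.1 + jk.2 : ℤ) : ℝ) ≤ ((2:ℝ)^(m+1)) := by
          have := hub
          exact_mod_cast this
        have hb0 : (0:ℝ) ≤ ((2 * jk.1 + jk.2 : ℤ) : ℝ) := by
          have : (0:ℤ) ≤ 2 * jk.1 + jk.2 := by omega
          exact_mod_cast this
        exact Real.rpow_le_rpow hb0 hble (by positivity)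
      calc ∑ jk ∈ Gm, f jk
          ≤ ∑ jk ∈ Gm, ((2:ℝ)^(m+1)) ^ (2*γ') * ‖uh jk‖^2 := Finset.sum_le_sum hperterm
        _ = ((2:ℝ)^(m+1)) ^ (2*γ') * ∑ jk ∈ Gm, ‖uh jk‖^2 := by rw [← Finset.mul_sum]
        _ ≤ ((2:ℝ)^(m+1)) ^ (2*γ') * ((1/3) * ((K : ℝ) * ((2 * π / 3) * ((2:ℝ)^m)⁻¹) ^ γ) ^ 2) := by
            apply mul_le_mul_of_nonneg_left hblock (Real.rpow_nonneg (by positivity) _)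
        _ = (1/3) * (K:ℝ)^2 * (((2:ℝ)^(m+1)) ^ (2*γ') * (((2 * π / 3) * ((2:ℝ)^m)⁻¹) ^ γ) ^ 2) := by
            ring
        _ ≤ (1/3) * (K:ℝ)^2 * (20 * r ^ m) := by
            apply mul_le_mul_of_nonneg_left (pow_arith γ γ' hγ1 hγ'0 hγ'γ m) (by positivity)
        _ = (20/3) * (K : ℝ)^2 * r ^ m := by ring
    calc ∑ m ∈ Finset.range MM, ∑ jk ∈ Fq.filter (fun jk => g jk = m), f jk
        ≤ ∑ m ∈ Finset.range MM, (20/3) * (K : ℝ)^2 * r ^ m := Finset.sum_le_sum hperm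
      _ = (20/3) * (K : ℝ)^2 * ∑ m ∈ Finset.range MM, r ^ m := by rw [← Finset.mul_sum]
      _ ≤ (20/3) * (K : ℝ)^2 * (3 / (γ - γ')) := by
          apply mul_le_mul_of_nonneg_left (geom_bound γ γ' hγ1 hγ'0 hγ'γ MM) (by positivity)
      _ ≤ 100 / (γ - γ') * (K : ℝ) ^ 2 := by
          have h1 : (20/3 : ℝ) * (K : ℝ)^2 * (3 / (γ - γ')) = 20 * ((K:ℝ)^2 / (γ - γ')) := by
            field_simp
          have h2 : (100:ℝ) / (γ - γ') * (K : ℝ) ^ 2 = 100 * ((K:ℝ)^2 / (γ - γ')) := by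
            ring
          have h3 : (0:ℝ) ≤ (K:ℝ)^2 / (γ - γ') := by positivity
          rw [h1, h2]
          linarith
  exact ⟨summable_of_sum_le hf0 hbound, Summable.tsum_le_of_sum_le (summable_of_sum_le hf0 hbound) hbound⟩
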